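/- Let F be a monotone subadditive quality cost with integer exponent α ≥ 1, let the predicted instance Ĵ be nonempty with 0 < OPT(Ĵ) < ∞, let 𝒥 be the true instance, and assume OfflineAlg is γ_off-competitive and OnlineAlg is γ_on-competitive. Then for all λ ∈ (0,1], the schedule S output by TPE run with confidence parameter λ satisfies cost(S, 𝒥) ≤ OPT(Ĵ)·( γ_off^{1/α} + γ_on^{1/α}·((λ·γ_off)^{1/α} + η₁^{1/α}) )^α. -/

import Mathlib

/-! STATEMENT 4 (Lemma 3.2): upper bound on the cost of the schedule output by TPE in terms of OPT(Ĵ) and the error η₁. -/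

open MeasureTheory Finset
open scoped ENNReal BigOperators Classical

/-- A job: identifier, release time, processing time, weight. -/
structure Job where
  id : ℕ
  r : ℝ
  p : ℝ
  v : ℝ

noncomputable instance : DecidableEq Job := Classical.decEq _

/-- An instance is valid when release times are nonnegative and processing
times and weights are positive. -/
def ValidInstance (J : Finset Job) : Prop :=
  ∀ j ∈ J, 0 ≤ j.r ∧ 0 < j.p ∧ 0 < j.v

/-- A schedule: speed functions for jobs. -/
abbrev Sched := Job → ℝ → ℝ

/-- `S` is a feasible schedule for the instance `J`. -/
def Feasible (J : Finset Job) (S : Sched) : Prop :=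
  ∀ j ∈ J, Measurable (S j) ∧ (∀ t, 0 ≤ S j t) ∧ (∀ t, t < j.r → S j t = 0) ∧
    (∫ t in Set.Ici j.r, S j t) = j.p

/-- Work profile of job `j` under schedule `S`: remaining work at time `t`. -/
noncomputable def work (S : Sched) (j : Job) (t : ℝ) : ℝ :=
  j.p - ∫ u in Set.Icc j.r t, S j u

/-- Energy consumption of schedule `S` on instance `J`, with exponent `α`. -/
noncomputable def energy (α : ℕ) (J : Finset Job) (S : Sched) : ℝ≥0∞ :=
  ∫⁻ t in Set.Ioi (0 : ℝ), ENNReal.ofReal ((∑ j ∈ J, S j t) ^ α)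

/-- A quality cost function: depends only on the work profiles (and job
parameters), is subadditive, monotone in the work profiles, and monotone
under job-set inclusion. -/
structure QualityCost where
  F : Sched → Finset Job → ℝ≥0∞
  profile_congr : ∀ S S' J, (∀ j ∈ J, ∀ t, work S j t = work S' j t) → F S J = F S' J
  subadd : ∀ S J₁ J₂, Disjoint J₁ J₂ → F S (J₁ ∪ J₂) ≤ F S J₁ + F S J₂
  mono_work : ∀ S S' J, (∀ j ∈ J, ∀ t, j.r ≤ t → work S j t ≤ work S' j t) → F S J ≤ F S' J
  mono_subset : ∀ S J' J, J' ⊆ J → F S J' ≤ F S J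

/-- Total cost of a schedule: energy plus quality cost. -/
noncomputable def cost (Q : QualityCost) (α : ℕ) (S : Sched) (J : Finset Job) : ℝ≥0∞ :=
  energy α J S + Q.F S J

/-- Optimal (offline) cost of an instance. -/
noncomputable def OPT (Q : QualityCost) (α : ℕ) (J : Finset Job) : ℝ≥0∞ :=
  ⨅ (S : Sched) (_ : Feasible J S), cost Q α S J

/-- Jobs of `J` released at or before time `t`. -/
noncomputable def restrictLE (J : Finset Job) (t : ℝ) : Finset Job :=
  J.filter fun j => j.r ≤ t

/-- Jobs of `J` released at or after time `t`. -/
noncomputable def restrictGE (J : Finset Job) (t : ℝ) : Finset Job :=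
  J.filter fun j => t ≤ j.r

/-- `A` is a `γ`-competitive offline algorithm: on every instance it returns a
feasible schedule whose cost is between the optimum and `γ` times the optimum. -/
def OfflineCompetitive (Q : QualityCost) (α : ℕ) (γ : ℝ≥0∞) (A : Finset Job → Sched) : Prop :=
  ∀ K : Finset Job, ValidInstance K →
    Feasible K (A K) ∧ OPT Q α K ≤ cost Q α (A K) K ∧ cost Q α (A K) K ≤ γ * OPT Q α K

/-- `A` is a `γ`-competitive online algorithm: on every instance it returns a
feasible schedule of cost at most `γ` times the optimum. -/
def OnlineCompetitive (Q : QualityCost) (α : ℕ) (γ : ℝ≥0∞) (A : Finset Job → Sched) : Prop :=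
  ∀ K : Finset Job, ValidInstance K →
    Feasible K (A K) ∧ cost Q α (A K) K ≤ γ * OPT Q α K

/-- Cost `OFF(K)` achieved by the offline algorithm `Off` on instance `K`. -/
noncomputable def OFFcost (Q : QualityCost) (α : ℕ) (Off : Finset Job → Sched)
    (K : Finset Job) : ℝ≥0∞ :=
  cost Q α (Off K) K

/-- `S` is the schedule output by the algorithm TPE with offline algorithm `Off`,
online algorithm `On`, prediction `Jhat`, true instance `J` and confidence `lam`:
either `OFF(𝒥_{≤t}) ≤ λ·OFF(Ĵ)` for all times `t ≥ 0` and TPE outputs `On(𝒥)`,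
or TPE switches at the first time `t_λ` with `OFF(𝒥_{≤t_λ}) > λ·OFF(Ĵ)` and
outputs the combination of `OfflineAlg(Ĵ_{≥t_λ})` (for the correctly predicted
jobs `𝒥 ∩ Ĵ_{≥t_λ}`) and `OnlineAlg(𝒥 \ Ĵ_{≥t_λ})` (for all other jobs). -/
def TPEOutput (Q : QualityCost) (α : ℕ) (Off On : Finset Job → Sched)
    (Jhat J : Finset Job) (lam : ℝ) (S : Sched) : Prop :=
  ((∀ t : ℝ, 0 ≤ t →
      OFFcost Q α Off (restrictLE J t) ≤ ENNReal.ofReal lam * OFFcost Q α Off Jhat) ∧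
    S = On J) ∨
  (∃ tl : ℝ, 0 ≤ tl ∧
    ENNReal.ofReal lam * OFFcost Q α Off Jhat < OFFcost Q α Off (restrictLE J tl) ∧
    (∀ t : ℝ, 0 ≤ t →
      ENNReal.ofReal lam * OFFcost Q α Off Jhat < OFFcost Q α Off (restrictLE J t) → tl ≤ t) ∧
    S = fun j t =>
      if j ∈ J ∩ restrictGE Jhat tl then Off (restrictGE Jhat tl) j t
      else On (J \ restrictGE Jhat tl) j t)

/-! ### Auxiliary lemmas -/

lemma two_point_minkowski {α : ℕ} (hα : 1 ≤ α) (a b c d : ℝ≥0∞) :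
    (a ^ (α:ℝ)⁻¹ + b ^ (α:ℝ)⁻¹) ^ (α:ℝ) + (c + d)
      ≤ ((a + c) ^ (α:ℝ)⁻¹ + (b + d) ^ (α:ℝ)⁻¹) ^ (α:ℝ) := by
  have hp1 : (1:ℝ) ≤ (α:ℝ) := by exact_mod_cast hα
  have hp0 : (α:ℝ) ≠ 0 := by positivity
  have hpnn : (0:ℝ) ≤ (α:ℝ) := by positivity
  have H := ENNReal.Lp_add_le (Finset.univ : Finset (Fin 2))
    (![a ^ (α:ℝ)⁻¹, c ^ (α:ℝ)⁻¹]) (![b ^ (α:ℝ)⁻¹, d ^ (α:ℝ)⁻¹]) hp1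
  simp only [Fin.sum_univ_two, Matrix.cons_val_zero, Matrix.cons_val_one, Matrix.head_cons,
    ENNReal.rpow_inv_rpow hp0, one_div] at H
  have H2 := ENNReal.rpow_le_rpow H hpnn
  rw [ENNReal.rpow_inv_rpow hp0] at H2
  refine le_trans ?_ H2
  gcongr
  calc c + d = (c ^ (α:ℝ)⁻¹) ^ (α:ℝ) + (d ^ (α:ℝ)⁻¹) ^ (α:ℝ) := by
        rw [ENNReal.rpow_inv_rpow hp0, ENNReal.rpow_inv_rpow hp0]
    _ ≤ (c ^ (α:ℝ)⁻¹ + d ^ (α:ℝ)⁻¹) ^ (α:ℝ) := ENNReal.add_rpow_le_rpow_add _ _ hp1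

lemma ennreal_rpow_iInf {ι : Sort*} (f : ι → ℝ≥0∞) {y : ℝ} (hy : 0 < y) :
    (⨅ i, f i) ^ y = ⨅ i, f i ^ y := by
  have h := (ENNReal.orderIsoRpow y hy).map_iInf f
  simp only [ENNReal.orderIsoRpow_apply] at h
  exact h

lemma valid_subset {J' J : Finset Job} (h : J' ⊆ J) (hV : ValidInstance J) :
    ValidInstance J' := fun j hj => hV j (h hj)

lemma feasible_subset {J' J : Finset Job} {S : Sched} (h : J' ⊆ J) (hS : Feasible J S) :
    Feasible J' S := fun j hj => hS j (h hj)

lemma energy_mono (α : ℕ) {J' J : Finset Job} {S : Sched} (h : J' ⊆ J)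
    (hn : ∀ j ∈ J, ∀ t, 0 ≤ S j t) : energy α J' S ≤ energy α J S := by
  refine lintegral_mono fun t => ?_
  refine ENNReal.ofReal_le_ofReal ?_
  refine pow_le_pow_left₀ (Finset.sum_nonneg fun j hj => hn j (h hj) t) ?_ α
  exact Finset.sum_le_sum_of_subset_of_nonneg h fun j hj _ => hn j hj t

lemma cost_mono_subset (Q : QualityCost) (α : ℕ) {J' J : Finset Job} {S : Sched} (h : J' ⊆ J)
    (hn : ∀ j ∈ J, ∀ t, 0 ≤ S j t) : cost Q α S J' ≤ cost Q α S J :=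
  add_le_add (energy_mono α h hn) (Q.mono_subset S J' J h)

lemma OPT_le_cost (Q : QualityCost) (α : ℕ) {J : Finset Job} {S : Sched} (hS : Feasible J S) :
    OPT Q α J ≤ cost Q α S J := iInf₂_le S hS

lemma OPT_mono (Q : QualityCost) (α : ℕ) {J' J : Finset Job} (h : J' ⊆ J) :
    OPT Q α J' ≤ OPT Q α J := by
  refine le_iInf₂ fun S hS => ?_
  exact le_trans (OPT_le_cost Q α (feasible_subset h hS))
    (cost_mono_subset Q α h fun j hj t => (hS j hj).2.1 t)

lemma energy_eq_rpow (α : ℕ) (C : Finset Job) (T : Sched)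
    (hn : ∀ j ∈ C, ∀ t, 0 ≤ T j t) :
    energy α C T = ∫⁻ t in Set.Ioi (0:ℝ), (∑ j ∈ C, ENNReal.ofReal (T j t)) ^ (α:ℝ) := by
  refine lintegral_congr fun t => ?_
  rw [← ENNReal.ofReal_sum_of_nonneg (fun j hj => hn j hj t), ENNReal.rpow_natCast,
    ← ENNReal.ofReal_pow (Finset.sum_nonneg fun j hj => hn j hj t)]

lemma energy_combine (α : ℕ) (hα : 1 ≤ α) (S S1 S2 : Sched) (A B A₀ B₀ : Finset Job)
    (hAB : Disjoint A B) (hA₀ : A ⊆ A₀) (hB₀ : B ⊆ B₀)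
    (h1 : ∀ j ∈ A, S j = S1 j) (h2 : ∀ j ∈ B, S j = S2 j)
    (hm1 : ∀ j ∈ A₀, Measurable (S1 j)) (hn1 : ∀ j ∈ A₀, ∀ t, 0 ≤ S1 j t)
    (hm2 : ∀ j ∈ B₀, Measurable (S2 j)) (hn2 : ∀ j ∈ B₀, ∀ t, 0 ≤ S2 j t) :
    energy α (A ∪ B) S ≤
      ((energy α A₀ S1) ^ (α:ℝ)⁻¹ + (energy α B₀ S2) ^ (α:ℝ)⁻¹) ^ (α:ℝ) := by
  have hp1 : (1:ℝ) ≤ (α:ℝ) := by exact_mod_cast hα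
  have hp0 : (α:ℝ) ≠ 0 := by positivity
  have hpnn : (0:ℝ) ≤ (α:ℝ) := by positivity
  set f : ℝ → ℝ≥0∞ := fun t => ∑ j ∈ A₀, ENNReal.ofReal (S1 j t) with hf
  set g : ℝ → ℝ≥0∞ := fun t => ∑ j ∈ B₀, ENNReal.ofReal (S2 j t) with hg
  have hfm : Measurable f := Finset.measurable_sum _ fun j hj => (hm1 j hj).ennreal_ofReal
  have hgm : Measurable g := Finset.measurable_sum _ fun j hj => (hm2 j hj).ennreal_ofReal
  have hstep : energy α (A ∪ B) S ≤ ∫⁻ t in Set.Ioi (0:ℝ), ((f + g) t) ^ (α:ℝ) := by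
    refine lintegral_mono fun t => ?_
    have hnn : ∀ j ∈ A ∪ B, 0 ≤ S j t := by
      intro j hj
      rcases Finset.mem_union.1 hj with hj | hj
      · rw [h1 j hj]; exact hn1 j (hA₀ hj) t
      · rw [h2 j hj]; exact hn2 j (hB₀ hj) t
    have hx : 0 ≤ ∑ j ∈ A ∪ B, S j t := Finset.sum_nonneg hnn
    calc ENNReal.ofReal ((∑ j ∈ A ∪ B, S j t) ^ α)
        = (∑ j ∈ A ∪ B, ENNReal.ofReal (S j t)) ^ (α:ℝ) := by
          rw [← ENNReal.ofReal_sum_of_nonneg hnn, ENNReal.rpow_natCast,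
            ← ENNReal.ofReal_pow hx]
      _ ≤ ((f + g) t) ^ (α:ℝ) := by
          refine ENNReal.rpow_le_rpow ?_ hpnn
          rw [Finset.sum_union hAB, Pi.add_apply]
          have e1 : (∑ j ∈ A, ENNReal.ofReal (S j t)) ≤ f t := by
            have he : (∑ j ∈ A, ENNReal.ofReal (S j t))
                = ∑ j ∈ A, ENNReal.ofReal (S1 j t) :=
              Finset.sum_congr rfl fun j hj => by rw [h1 j hj]
            rw [he]
            exact Finset.sum_le_sum_of_subset hA₀
          have e2 : (∑ j ∈ B, ENNReal.ofReal (S j t)) ≤ g t := by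
            have he : (∑ j ∈ B, ENNReal.ofReal (S j t))
                = ∑ j ∈ B, ENNReal.ofReal (S2 j t) :=
              Finset.sum_congr rfl fun j hj => by rw [h2 j hj]
            rw [he]
            exact Finset.sum_le_sum_of_subset hB₀
          exact add_le_add e1 e2
  have hmink := ENNReal.lintegral_Lp_add_le (μ := volume.restrict (Set.Ioi (0:ℝ)))
      hfm.aemeasurable hgm.aemeasurable hp1
  simp only [one_div] at hmink
  calc energy α (A ∪ B) S ≤ ∫⁻ t in Set.Ioi (0:ℝ), ((f + g) t) ^ (α:ℝ) := hstep
    _ = ((∫⁻ t in Set.Ioi (0:ℝ), ((f + g) t) ^ (α:ℝ)) ^ (α:ℝ)⁻¹) ^ (α:ℝ) := by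
        rw [ENNReal.rpow_inv_rpow hp0]
    _ ≤ ((∫⁻ t in Set.Ioi (0:ℝ), f t ^ (α:ℝ)) ^ (α:ℝ)⁻¹
          + (∫⁻ t in Set.Ioi (0:ℝ), g t ^ (α:ℝ)) ^ (α:ℝ)⁻¹) ^ (α:ℝ) :=
        ENNReal.rpow_le_rpow hmink hpnn
    _ = ((energy α A₀ S1) ^ (α:ℝ)⁻¹ + (energy α B₀ S2) ^ (α:ℝ)⁻¹) ^ (α:ℝ) := by
        rw [energy_eq_rpow α A₀ S1 hn1, energy_eq_rpow α B₀ S2 hn2]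

lemma cost_combine (Q : QualityCost) (α : ℕ) (hα : 1 ≤ α) (S S1 S2 : Sched)
    (A B A₀ B₀ : Finset Job) (hAB : Disjoint A B) (hA₀ : A ⊆ A₀) (hB₀ : B ⊆ B₀)
    (h1 : ∀ j ∈ A, S j = S1 j) (h2 : ∀ j ∈ B, S j = S2 j)
    (hm1 : ∀ j ∈ A₀, Measurable (S1 j)) (hn1 : ∀ j ∈ A₀, ∀ t, 0 ≤ S1 j t)
    (hm2 : ∀ j ∈ B₀, Measurable (S2 j)) (hn2 : ∀ j ∈ B₀, ∀ t, 0 ≤ S2 j t) :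
    cost Q α S (A ∪ B) ≤
      ((cost Q α S1 A₀) ^ (α:ℝ)⁻¹ + (cost Q α S2 B₀) ^ (α:ℝ)⁻¹) ^ (α:ℝ) := by
  have hE := energy_combine α hα S S1 S2 A B A₀ B₀ hAB hA₀ hB₀ h1 h2 hm1 hn1 hm2 hn2
  have hFA : Q.F S A = Q.F S1 A :=
    Q.profile_congr S S1 A fun j hj t => by unfold work; rw [h1 j hj]
  have hFB : Q.F S B = Q.F S2 B :=
    Q.profile_congr S S2 B fun j hj t => by unfold work; rw [h2 j hj]
  have hF : Q.F S (A ∪ B) ≤ Q.F S1 A₀ + Q.F S2 B₀ := by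
    calc Q.F S (A ∪ B) ≤ Q.F S A + Q.F S B := Q.subadd S A B hAB
      _ = Q.F S1 A + Q.F S2 B := by rw [hFA, hFB]
      _ ≤ Q.F S1 A₀ + Q.F S2 B₀ :=
          add_le_add (Q.mono_subset _ _ _ hA₀) (Q.mono_subset _ _ _ hB₀)
  calc cost Q α S (A ∪ B) = energy α (A ∪ B) S + Q.F S (A ∪ B) := rfl
    _ ≤ ((energy α A₀ S1) ^ (α:ℝ)⁻¹ + (energy α B₀ S2) ^ (α:ℝ)⁻¹) ^ (α:ℝ)
        + (Q.F S1 A₀ + Q.F S2 B₀) := add_le_add hE hF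
    _ ≤ ((energy α A₀ S1 + Q.F S1 A₀) ^ (α:ℝ)⁻¹
          + (energy α B₀ S2 + Q.F S2 B₀) ^ (α:ℝ)⁻¹) ^ (α:ℝ) :=
        two_point_minkowski hα _ _ _ _
    _ = ((cost Q α S1 A₀) ^ (α:ℝ)⁻¹ + (cost Q α S2 B₀) ^ (α:ℝ)⁻¹) ^ (α:ℝ) := rfl

lemma le_phi_OPT (Q : QualityCost) (α : ℕ) (hα : 1 ≤ α) (x c : ℝ≥0∞) (D : Finset Job)
    (h : ∀ SD : Sched, Feasible D SD →
        x ≤ (c ^ (α:ℝ)⁻¹ + (cost Q α SD D) ^ (α:ℝ)⁻¹) ^ (α:ℝ)) :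
    x ≤ (c ^ (α:ℝ)⁻¹ + (OPT Q α D) ^ (α:ℝ)⁻¹) ^ (α:ℝ) := by
  have hppos : (0:ℝ) < (α:ℝ) := by exact_mod_cast hα.trans_lt' Nat.zero_lt_one
  have hrpos : (0:ℝ) < (α:ℝ)⁻¹ := by positivity
  have hsub : OPT Q α D = ⨅ i : {T : Sched // Feasible D T}, cost Q α i.1 D := by
    rw [OPT]; exact iInf_subtype'
  rw [hsub, ennreal_rpow_iInf _ hrpos, ENNReal.add_iInf, ennreal_rpow_iInf _ hppos]
  exact le_iInf fun i => h i.1 i.2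

/-- **Lemma 3.2.** If `OfflineAlg` is `γ_off`-competitive and `OnlineAlg` is
`γ_on`-competitive then, for all `λ ∈ (0,1]`, the schedule `S` output by TPE
run with confidence parameter `λ` satisfies
`cost(S,𝒥) ≤ OPT(Ĵ)·(γ_off^{1/α} + γ_on^{1/α}((λγ_off)^{1/α} + η₁^{1/α}))^α`. -/
theorem tpe_cost_upper_bound (Q : QualityCost) (α : ℕ) (hα : 1 ≤ α)
    (γoff γon : ℝ≥0∞) (Off On : Finset Job → Sched)
    (hOff : OfflineCompetitive Q α γoff Off) (hOn : OnlineCompetitive Q α γon On)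
    (Jhat J : Finset Job) (hJhatV : ValidInstance Jhat) (hJV : ValidInstance J)
    (hne : Jhat.Nonempty) (hpos : 0 < OPT Q α Jhat) (hfin : OPT Q α Jhat < ⊤)
    (lam : ℝ) (hlam0 : 0 < lam) (hlam1 : lam ≤ 1)
    (η₁ : ℝ≥0∞) (hη₁ : η₁ = OPT Q α (J \ Jhat) / OPT Q α Jhat)
    (S : Sched) (hS : TPEOutput Q α Off On Jhat J lam S) :
    cost Q α S J ≤
      OPT Q α Jhat *
        (γoff ^ ((α : ℝ)⁻¹) +
          γon ^ ((α : ℝ)⁻¹) *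
            ((ENNReal.ofReal lam * γoff) ^ ((α : ℝ)⁻¹) + η₁ ^ ((α : ℝ)⁻¹))) ^ (α : ℝ) := by
  have hα0 : (0:ℝ) < (α:ℝ) := by exact_mod_cast hα.trans_lt' Nat.zero_lt_one
  have hp0 : (α:ℝ) ≠ 0 := ne_of_gt hα0
  have hpnn : (0:ℝ) ≤ (α:ℝ) := le_of_lt hα0
  have hrnn : (0:ℝ) ≤ (α:ℝ)⁻¹ := by positivity
  set X := OPT Q α Jhat with hX
  set l := ENNReal.ofReal lam with hl
  have hOFFJhat : OFFcost Q α Off Jhat ≤ γoff * X := (hOff Jhat hJhatV).2.2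
  have hD : η₁ * X = OPT Q α (J \ Jhat) := by
    rw [hη₁]; exact ENNReal.div_mul_cancel hpos.ne' hfin.ne
  rcases hS with ⟨hall, hSeq⟩ | ⟨tl, htl0, hsw, hmin, hSeq⟩
  · -- Case 1 : never switches
    have ht0 : (0:ℝ) ≤ ∑ j ∈ J, |j.r| := Finset.sum_nonneg fun j _ => abs_nonneg _
    have hres : restrictLE J (∑ j ∈ J, |j.r|) = J := by
      refine Finset.filter_true_of_mem fun j hj => ?_
      exact le_trans (le_abs_self _) (Finset.single_le_sum (f := fun j => |j.r|) (fun i _ => abs_nonneg _) hj)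
    have h1 : OFFcost Q α Off J ≤ l * OFFcost Q α Off Jhat := by
      have := hall _ ht0; rwa [hres] at this
    have h2 : OPT Q α J ≤ OFFcost Q α Off J := (hOff J hJV).2.1
    have h3 : cost Q α S J ≤ γon * OPT Q α J := by rw [hSeq]; exact (hOn J hJV).2
    have h4 : cost Q α S J ≤ X * (γon * (l * γoff)) := by
      calc cost Q α S J ≤ γon * OPT Q α J := h3
        _ ≤ γon * (l * (γoff * X)) := by
            refine mul_le_mul_right (le_trans h2 (le_trans h1 ?_)) γon
            exact mul_le_mul_right hOFFJhat l
        _ = X * (γon * (l * γoff)) := by ring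
    refine le_trans h4 (mul_le_mul_right ?_ X)
    have hrw : γon * (l * γoff) = ((γon * (l * γoff)) ^ (α:ℝ)⁻¹) ^ (α:ℝ) :=
      (ENNReal.rpow_inv_rpow hp0 _).symm
    rw [hrw]
    refine ENNReal.rpow_le_rpow ?_ hpnn
    rw [ENNReal.mul_rpow_of_nonneg _ _ hrnn]
    calc γon ^ (α:ℝ)⁻¹ * (l * γoff) ^ (α:ℝ)⁻¹
        ≤ γon ^ (α:ℝ)⁻¹ * ((l * γoff) ^ (α:ℝ)⁻¹ + η₁ ^ (α:ℝ)⁻¹) :=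
          mul_le_mul_right le_self_add _
      _ ≤ γoff ^ (α:ℝ)⁻¹ + γon ^ (α:ℝ)⁻¹ * ((l * γoff) ^ (α:ℝ)⁻¹ + η₁ ^ (α:ℝ)⁻¹) :=
          le_add_self
  · -- Case 2 : switches at time tl
    set Ahat := restrictGE Jhat tl with hAhat
    set B := J \ Ahat with hBdef
    have hAhatV : ValidInstance Ahat := valid_subset (Finset.filter_subset _ _) hJhatV
    have hBV : ValidInstance B := valid_subset Finset.sdiff_subset hJV
    have hfA := (hOff Ahat hAhatV).1
    have hfB := (hOn B hBV).1
    have hJeq : (J ∩ Ahat) ∪ B = J := by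
      ext j
      simp only [Finset.mem_union, Finset.mem_inter, hBdef, Finset.mem_sdiff]
      tauto
    have hdisj : Disjoint (J ∩ Ahat) B := by
      rw [Finset.disjoint_left]
      intro j hj1 hj2
      exact (Finset.mem_sdiff.1 hj2).2 (Finset.mem_inter.1 hj1).2
    have h1 : ∀ j ∈ J ∩ Ahat, S j = Off Ahat j := by
      intro j hj; funext t; rw [hSeq]; simp only; rw [if_pos hj]
    have h2 : ∀ j ∈ B, S j = On B j := by
      intro j hj; funext t; rw [hSeq]; simp only
      rw [if_neg fun hmem => (Finset.mem_sdiff.1 hj).2 (Finset.mem_inter.1 hmem).2]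
    have hcomb : cost Q α S J ≤
        ((cost Q α (Off Ahat) Ahat) ^ (α:ℝ)⁻¹
          + (cost Q α (On B) B) ^ (α:ℝ)⁻¹) ^ (α:ℝ) := by
      conv_lhs => rw [← hJeq]
      exact cost_combine Q α hα S (Off Ahat) (On B) (J ∩ Ahat) B Ahat B hdisj
        Finset.inter_subset_right subset_rfl h1 h2
        (fun j hj => (hfA j hj).1) (fun j hj t => (hfA j hj).2.1 t)
        (fun j hj => (hfB j hj).1) (fun j hj t => (hfB j hj).2.1 t)
    have hcA : cost Q α (Off Ahat) Ahat ≤ γoff * X :=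
      le_trans (hOff Ahat hAhatV).2.2
        (mul_le_mul_right (OPT_mono Q α (Finset.filter_subset _ _)) γoff)
    set D := J \ Jhat with hDdef
    have hDV : ValidInstance D := valid_subset Finset.sdiff_subset hJV
    set C := J.filter (fun j => j.r < tl) with hCdef
    have hBsub : B ⊆ C ∪ (D \ C) := by
      intro j hj
      rcases Finset.mem_sdiff.1 hj with ⟨hjJ, hjA⟩
      by_cases hr : j.r < tl
      · exact Finset.mem_union_left _ (Finset.mem_filter.2 ⟨hjJ, hr⟩)
      · have hjD : j ∈ D := by
          refine Finset.mem_sdiff.2 ⟨hjJ, fun hjh => hjA ?_⟩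
          exact Finset.mem_filter.2 ⟨hjh, le_of_not_gt hr⟩
        by_cases hc : j ∈ C
        · exact Finset.mem_union_left _ hc
        · exact Finset.mem_union_right _ (Finset.mem_sdiff.2 ⟨hjD, hc⟩)
    have hOPTB : OPT Q α B ≤
        ((l * γoff * X) ^ (α:ℝ)⁻¹ + (OPT Q α D) ^ (α:ℝ)⁻¹) ^ (α:ℝ) := by
      rcases Finset.eq_empty_or_nonempty C with hCe | hCne
      · have hBD : B ⊆ D := by
          intro j hj
          have hmem := hBsub hj
          rw [hCe] at hmem
          simpa using hmem
        refine le_trans (OPT_mono Q α hBD) ?_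
        calc OPT Q α D = ((OPT Q α D) ^ (α:ℝ)⁻¹) ^ (α:ℝ) :=
              (ENNReal.rpow_inv_rpow hp0 _).symm
          _ ≤ _ := ENNReal.rpow_le_rpow le_add_self hpnn
      · set t' := C.sup' hCne (fun j => j.r) with ht'def
        have ht'lt : t' < tl := by
          rw [ht'def, Finset.sup'_lt_iff]
          intro j hj; exact (Finset.mem_filter.1 hj).2
        have ht'0 : 0 ≤ t' := by
          obtain ⟨j0, hj0⟩ := hCne
          exact le_trans (hJV j0 (Finset.mem_filter.1 hj0).1).1 (Finset.le_sup' _ hj0)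
        have hCeq : C = restrictLE J t' := by
          ext j
          simp only [hCdef, restrictLE, Finset.mem_filter]
          constructor
          · rintro ⟨hjJ, hjr⟩
            exact ⟨hjJ, Finset.le_sup' _ (Finset.mem_filter.2 ⟨hjJ, hjr⟩)⟩
          · rintro ⟨hjJ, hjr⟩
            exact ⟨hjJ, lt_of_le_of_lt hjr ht'lt⟩
        have hCV : ValidInstance C := valid_subset (Finset.filter_subset _ _) hJV
        have hfC := (hOff C hCV).1
        have hOFFC : OFFcost Q α Off C ≤ l * OFFcost Q α Off Jhat := by
          by_contra hcon
          have hlt : l * OFFcost Q α Off Jhat < OFFcost Q α Off (restrictLE J t') := by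
            rw [← hCeq]; exact lt_of_not_ge hcon
          exact absurd (hmin t' ht'0 hlt) (not_le.2 ht'lt)
        have hcC : cost Q α (Off C) C ≤ l * γoff * X := by
          refine le_trans hOFFC ?_
          rw [mul_assoc]
          exact mul_le_mul_right hOFFJhat l
        refine le_phi_OPT Q α hα _ _ D (fun SD hSD => ?_)
        set T : Sched := fun j t => if j ∈ C then Off C j t else SD j t with hTdef
        have hT1 : ∀ j ∈ C, T j = Off C j := by
          intro j hj; funext t; rw [hTdef]; simp only; rw [if_pos hj]
        have hT2 : ∀ j ∈ D \ C, T j = SD j := by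
          intro j hj; funext t; rw [hTdef]; simp only
          rw [if_neg (Finset.mem_sdiff.1 hj).2]
        have hdisj2 : Disjoint C (D \ C) := Finset.disjoint_sdiff
        have hcomb2 := cost_combine Q α hα T (Off C) SD C (D \ C) C D hdisj2 subset_rfl
          Finset.sdiff_subset hT1 hT2
          (fun j hj => (hfC j hj).1) (fun j hj t => (hfC j hj).2.1 t)
          (fun j hj => (hSD j hj).1) (fun j hj t => (hSD j hj).2.1 t)
        have hfeasT : Feasible (C ∪ (D \ C)) T := by
          intro j hj
          rcases Finset.mem_union.1 hj with hj' | hj'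
          · rw [hT1 j hj']; exact hfC j hj'
          · rw [hT2 j hj']; exact hSD j (Finset.mem_sdiff.1 hj').1
        have hOPTle : OPT Q α B ≤ cost Q α T B :=
          OPT_le_cost Q α (feasible_subset hBsub hfeasT)
        have hcmono : cost Q α T B ≤ cost Q α T (C ∪ (D \ C)) := by
          refine cost_mono_subset Q α hBsub fun j hj t => ?_
          rcases Finset.mem_union.1 hj with hj' | hj'
          · rw [hT1 j hj']; exact (hfC j hj').2.1 t
          · rw [hT2 j hj']; exact (hSD j (Finset.mem_sdiff.1 hj').1).2.1 t
        calc OPT Q α B ≤ cost Q α T (C ∪ (D \ C)) := le_trans hOPTle hcmono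
          _ ≤ ((cost Q α (Off C) C) ^ (α:ℝ)⁻¹
                + (cost Q α SD D) ^ (α:ℝ)⁻¹) ^ (α:ℝ) := hcomb2
          _ ≤ ((l * γoff * X) ^ (α:ℝ)⁻¹ + (cost Q α SD D) ^ (α:ℝ)⁻¹) ^ (α:ℝ) :=
              ENNReal.rpow_le_rpow
                (add_le_add_left (ENNReal.rpow_le_rpow hcC hrnn) _) hpnn
    have hcB : cost Q α (On B) B ≤
        γon * ((l * γoff * X) ^ (α:ℝ)⁻¹ + (OPT Q α D) ^ (α:ℝ)⁻¹) ^ (α:ℝ) :=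
      le_trans (hOn B hBV).2 (mul_le_mul_right hOPTB γon)
    refine le_trans hcomb ?_
    have e1 : (cost Q α (Off Ahat) Ahat) ^ (α:ℝ)⁻¹ ≤ γoff ^ (α:ℝ)⁻¹ * X ^ (α:ℝ)⁻¹ := by
      refine le_trans (ENNReal.rpow_le_rpow hcA hrnn) ?_
      rw [ENNReal.mul_rpow_of_nonneg _ _ hrnn]
    have e2 : (cost Q α (On B) B) ^ (α:ℝ)⁻¹ ≤
        γon ^ (α:ℝ)⁻¹ * ((l * γoff) ^ (α:ℝ)⁻¹ * X ^ (α:ℝ)⁻¹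
          + η₁ ^ (α:ℝ)⁻¹ * X ^ (α:ℝ)⁻¹) := by
      refine le_trans (ENNReal.rpow_le_rpow hcB hrnn) ?_
      rw [ENNReal.mul_rpow_of_nonneg _ _ hrnn, ENNReal.rpow_rpow_inv hp0]
      refine mul_le_mul_right ?_ _
      rw [← hD, ENNReal.mul_rpow_of_nonneg (l * γoff) X hrnn,
        ENNReal.mul_rpow_of_nonneg η₁ X hrnn]
    have hfinal : (cost Q α (Off Ahat) Ahat) ^ (α:ℝ)⁻¹ + (cost Q α (On B) B) ^ (α:ℝ)⁻¹ ≤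
        X ^ (α:ℝ)⁻¹ * (γoff ^ (α:ℝ)⁻¹
          + γon ^ (α:ℝ)⁻¹ * ((l * γoff) ^ (α:ℝ)⁻¹ + η₁ ^ (α:ℝ)⁻¹)) := by
      calc (cost Q α (Off Ahat) Ahat) ^ (α:ℝ)⁻¹ + (cost Q α (On B) B) ^ (α:ℝ)⁻¹
          ≤ γoff ^ (α:ℝ)⁻¹ * X ^ (α:ℝ)⁻¹
            + γon ^ (α:ℝ)⁻¹ * ((l * γoff) ^ (α:ℝ)⁻¹ * X ^ (α:ℝ)⁻¹
              + η₁ ^ (α:ℝ)⁻¹ * X ^ (α:ℝ)⁻¹) := add_le_add e1 e2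
        _ = X ^ (α:ℝ)⁻¹ * (γoff ^ (α:ℝ)⁻¹
              + γon ^ (α:ℝ)⁻¹ * ((l * γoff) ^ (α:ℝ)⁻¹ + η₁ ^ (α:ℝ)⁻¹)) := by ring
    calc ((cost Q α (Off Ahat) Ahat) ^ (α:ℝ)⁻¹ + (cost Q α (On B) B) ^ (α:ℝ)⁻¹) ^ (α:ℝ)
        ≤ (X ^ (α:ℝ)⁻¹ * (γoff ^ (α:ℝ)⁻¹
            + γon ^ (α:ℝ)⁻¹ * ((l * γoff) ^ (α:ℝ)⁻¹ + η₁ ^ (α:ℝ)⁻¹))) ^ (α:ℝ) :=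
          ENNReal.rpow_le_rpow hfinal hpnn
      _ = X * (γoff ^ (α:ℝ)⁻¹
            + γon ^ (α:ℝ)⁻¹ * ((l * γoff) ^ (α:ℝ)⁻¹ + η₁ ^ (α:ℝ)⁻¹)) ^ (α:ℝ) := by
          rw [ENNReal.mul_rpow_of_nonneg _ _ hpnn, ENNReal.rpow_inv_rpow hp0]
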